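/- Let G be a group, N ⊴ G a normal subgroup, and λ an element of ℚ[N]⟨G/N⟩, i.e. a formal series λ = Σ_{t∈T} λ_t t with T a well-ordered subset of a transversal of N in G and each λ_t ∈ ℚ[N] a finitely supported element. Then the projection supp(λ) → G/N has finite fibers, and the induced series λ̄ = Σ λ_t π(t) is a well-defined element of ℚ⟨G/N⟩ (its support in G/N is well-ordered), extending the natural ring homomorphism ℚ[G] → ℚ[G/N]. -/

import Mathlib

open scoped Classical

theorem stmt17 (G : Type*) [Group G] [LinearOrder G]
    (hbi : ∀ a b c : G, a ≤ b → a * c ≤ b * c ∧ c * a ≤ c * b)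
    (N : Subgroup G) [N.Normal] [LinearOrder (G ⧸ N)]
    -- `T` is a transversal of `N` in `G` on which the projection is monotone
    (T : Set G)
    (hT : ∀ q : G ⧸ N, ∃! t, t ∈ T ∧ (QuotientGroup.mk t : G ⧸ N) = q)
    (hmono : ∀ t ∈ T, ∀ t' ∈ T, t < t' →
      (QuotientGroup.mk t : G ⧸ N) < QuotientGroup.mk t')
    -- `λ ∈ ℚ[N]⟨G/N⟩`: a series `Σ_{t ∈ T₀} λ_t t` with `T₀ ⊆ T` well-ordered and
    -- each `λ_t ∈ ℚ[N]` finitely supported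
    (lam : G → ℚ)
    (T₀ : Set G) (hT₀T : T₀ ⊆ T) (hT₀ : T₀.IsWF)
    (hsupp : ∀ g : G, lam g ≠ 0 → ∃ t ∈ T₀, ∃ m ∈ N, g = m * t)
    (hfin : ∀ t ∈ T₀, {m : G | m ∈ N ∧ lam (m * t) ≠ 0}.Finite) :
    -- the projection `supp(λ) → G/N` has finite fibers
    (∀ q : G ⧸ N, {g : G | lam g ≠ 0 ∧ (QuotientGroup.mk g : G ⧸ N) = q}.Finite) ∧
    -- the induced series `λ̄ = Σ λ_t π(t)` has well-ordered support in `G/N`,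
    -- i.e. is a well-defined element of `ℚ⟨G/N⟩`
    (Function.support
      (fun q : G ⧸ N => ∑ᶠ g : G,
        if (QuotientGroup.mk g : G ⧸ N) = q then lam g else 0)).IsWF ∧
    -- the map `λ ↦ λ̄` extends the natural ring homomorphism `ℚ[G] → ℚ[G/N]`
    (∀ (p : MonoidAlgebra ℚ G) (q : G ⧸ N),
      (∑ᶠ g : G, if (QuotientGroup.mk g : G ⧸ N) = q then p.coeff g else 0) =
        (MonoidAlgebra.mapDomainRingHom ℚ (QuotientGroup.mk' N) p).coeff q) := by
  have key : ∀ (m : G), m ∈ N → ∀ t : G,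
      (QuotientGroup.mk (m * t) : G ⧸ N) = QuotientGroup.mk t := by
    intro m hm t
    rw [QuotientGroup.mk_mul, (QuotientGroup.eq_one_iff m).2 hm, one_mul]
  refine ⟨?_, ?_, ?_⟩
  · intro q
    by_cases hq : ∃ t ∈ T₀, (QuotientGroup.mk t : G ⧸ N) = q
    · obtain ⟨t, ht₀, htq⟩ := hq
      apply Set.Finite.subset (((hfin t ht₀).image (· * t)))
      rintro g ⟨hg, hgq⟩
      obtain ⟨t', ht'₀, m, hm, rfl⟩ := hsupp g hg
      obtain ⟨u, -, hu⟩ := hT q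
      have ht' : t' = t := by
        rw [hu t' ⟨hT₀T ht'₀, by rw [← key m hm t']; exact hgq⟩,
          hu t ⟨hT₀T ht₀, htq⟩]
      subst ht'
      exact ⟨m, ⟨hm, hg⟩, rfl⟩
    · convert Set.finite_empty
      ext g
      simp only [Set.mem_setOf_eq, Set.mem_empty_iff_false, iff_false, not_and]
      intro hg hgq
      obtain ⟨t, ht₀, m, hm, rfl⟩ := hsupp g hg
      exact hq ⟨t, ht₀, by rw [← key m hm t]; exact hgq⟩
  · have hsub : Function.support
        (fun q : G ⧸ N => ∑ᶠ g : G,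
          if (QuotientGroup.mk g : G ⧸ N) = q then lam g else 0)
        ⊆ (QuotientGroup.mk : G → G ⧸ N) '' T₀ := by
      intro q hq
      by_contra hq'
      apply hq
      have : ∀ g : G, (if (QuotientGroup.mk g : G ⧸ N) = q then lam g else 0) = 0 := by
        intro g
        split_ifs with h
        · by_contra hg
          obtain ⟨t, ht₀, m, hm, rfl⟩ := hsupp g hg
          exact hq' ⟨t, ht₀, by rw [← key m hm t]; exact h⟩
        · rfl
      simp only [this, finsum_zero]
    refine Set.IsWF.mono ?_ hsub
    refine ((hT₀.isPWO.image_of_monotoneOn ?_).isWF)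
    intro a ha b hb hab
    rcases eq_or_lt_of_le hab with rfl | h
    · exact le_rfl
    · exact (hmono a (hT₀T ha) b (hT₀T hb) h).le
  · intro p q
    have hsub : Function.support
        (fun g : G => if (QuotientGroup.mk g : G ⧸ N) = q then p.coeff g else 0)
        ⊆ (p.coeff.support : Set G) := by
      intro g hg
      simp only [Function.mem_support] at hg
      split_ifs at hg with h
      · exact Finsupp.mem_support_iff.2 hg
      · exact absurd rfl hg
    rw [finsum_eq_finset_sum_of_support_subset _ hsub]
    have : (MonoidAlgebra.mapDomainRingHom ℚ (QuotientGroup.mk' N) p).coeff q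
        = Finsupp.mapDomain (QuotientGroup.mk' N) p.coeff q := rfl
    rw [this, Finsupp.mapDomain, Finsupp.sum_apply, Finsupp.sum]
    refine Finset.sum_congr rfl fun g _ => ?_
    rw [Finsupp.single_apply]
    rfl
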